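/- If {u,v} and {u',v'} are positively oriented orthonormal bases of the same oriented 2-plane in the imaginary octonions, then u × v = u' × v'. Hence the assignment σ₂(u ∧ v) = u × v is a well-defined map from the Grassmannian of oriented 2-planes in ℝ^7 to the unit sphere of ℝ^7, with u × v orthogonal to the plane spanned by u and v. -/

import Mathlib

open scoped RealInnerProductSpace

noncomputable section

abbrev Oct : Type := EuclideanSpace ℝ (Fin 8)

def octe (i : Fin 8) : Oct := EuclideanSpace.single i 1

def plusTriples : List (Fin 8 × Fin 8 × Fin 8) :=
  [(1,2,3),(1,4,5),(1,7,6),(2,4,6),(2,5,7),(3,4,7),(3,6,5)]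

/-- Completely skew-symmetric structure tensor taking the value `+1` on the
triples 123, 145, 176, 246, 257, 347, 365. -/
def eps (i j k : Fin 8) : ℝ :=
  if plusTriples.any (fun t => decide ((i,j,k) = t ∨ (i,j,k) = (t.2.1, t.2.2, t.1) ∨
      (i,j,k) = (t.2.2, t.1, t.2.1))) then 1
  else if plusTriples.any (fun t => decide ((i,j,k) = (t.1, t.2.2, t.2.1) ∨
      (i,j,k) = (t.2.2, t.2.1, t.1) ∨ (i,j,k) = (t.2.1, t.1, t.2.2))) then -1
  else 0

/-- Structure constants of octonion multiplication:
`e_0 e_i = e_i e_0 = e_i` and `e_i e_j = -δ_ij e_0 + ε_ijk e_k` for `i,j ≥ 1`. -/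
def structC (i j k : Fin 8) : ℝ :=
  if i = 0 then (if j = k then 1 else 0)
  else if j = 0 then (if i = k then 1 else 0)
  else (if i = j ∧ k = 0 then (-1:ℝ) else 0) + eps i j k

/-- Octonion multiplication on ℝ⁸. -/
def octMul (x y : Oct) : Oct := WithLp.toLp 2 (fun k => ∑ i, ∑ j, x i * y j * structC i j k)

/-- Octonionic conjugation. -/
def octConj (x : Oct) : Oct := WithLp.toLp 2 (fun k => if k = 0 then x 0 else -(x k))

/-- The triple cross product `X(u,v,w) = -u(v̄w) + ⟨u,v⟩w + ⟨v,w⟩u - ⟨w,u⟩v`. -/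
def X3 (u v w : Oct) : Oct :=
  -octMul u (octMul (octConj v) w) + ⟪u, v⟫ • w + ⟪v, w⟫ • u - ⟪w, u⟫ • v

/-- The double cross product `u × v = uv + ⟨u,v⟩ e_0` (on imaginary octonions). -/
def cross2 (u v : Oct) : Oct := octMul u v + ⟪u, v⟫ • octe 0

lemma octMul_apply0 (x y : Oct) : octMul x y 0 = x 0 * y 0 - x 1 * y 1 - x 2 * y 2 - x 3 * y 3 - x 4 * y 4 - x 5 * y 5 - x 6 * y 6 - x 7 * y 7 := by
  show (∑ i, ∑ j, x i * y j * structC i j 0) = _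
  simp (config := { decide := true }) only [Fin.sum_univ_eight, structC, eps, plusTriples]
  norm_num; ring

lemma octMul_apply1 (x y : Oct) : octMul x y 1 = x 0 * y 1 + x 1 * y 0 + x 2 * y 3 - x 3 * y 2 + x 4 * y 5 - x 5 * y 4 - x 6 * y 7 + x 7 * y 6 := by
  show (∑ i, ∑ j, x i * y j * structC i j 1) = _
  simp (config := { decide := true }) only [Fin.sum_univ_eight, structC, eps, plusTriples]
  norm_num; ring

lemma octMul_apply2 (x y : Oct) : octMul x y 2 = x 0 * y 2 - x 1 * y 3 + x 2 * y 0 + x 3 * y 1 + x 4 * y 6 + x 5 * y 7 - x 6 * y 4 - x 7 * y 5 := by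
  show (∑ i, ∑ j, x i * y j * structC i j 2) = _
  simp (config := { decide := true }) only [Fin.sum_univ_eight, structC, eps, plusTriples]
  norm_num; ring

lemma octMul_apply3 (x y : Oct) : octMul x y 3 = x 0 * y 3 + x 1 * y 2 - x 2 * y 1 + x 3 * y 0 + x 4 * y 7 - x 5 * y 6 + x 6 * y 5 - x 7 * y 4 := by
  show (∑ i, ∑ j, x i * y j * structC i j 3) = _
  simp (config := { decide := true }) only [Fin.sum_univ_eight, structC, eps, plusTriples]
  norm_num; ring

lemma octMul_apply4 (x y : Oct) : octMul x y 4 = x 0 * y 4 - x 1 * y 5 - x 2 * y 6 - x 3 * y 7 + x 4 * y 0 + x 5 * y 1 + x 6 * y 2 + x 7 * y 3 := by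
  show (∑ i, ∑ j, x i * y j * structC i j 4) = _
  simp (config := { decide := true }) only [Fin.sum_univ_eight, structC, eps, plusTriples]
  norm_num; ring

lemma octMul_apply5 (x y : Oct) : octMul x y 5 = x 0 * y 5 + x 1 * y 4 - x 2 * y 7 + x 3 * y 6 - x 4 * y 1 + x 5 * y 0 - x 6 * y 3 + x 7 * y 2 := by
  show (∑ i, ∑ j, x i * y j * structC i j 5) = _
  simp (config := { decide := true }) only [Fin.sum_univ_eight, structC, eps, plusTriples]
  norm_num; ring

lemma octMul_apply6 (x y : Oct) : octMul x y 6 = x 0 * y 6 + x 1 * y 7 + x 2 * y 4 - x 3 * y 5 - x 4 * y 2 + x 5 * y 3 + x 6 * y 0 - x 7 * y 1 := by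
  show (∑ i, ∑ j, x i * y j * structC i j 6) = _
  simp (config := { decide := true }) only [Fin.sum_univ_eight, structC, eps, plusTriples]
  norm_num; ring

lemma octMul_apply7 (x y : Oct) : octMul x y 7 = x 0 * y 7 - x 1 * y 6 + x 2 * y 5 + x 3 * y 4 - x 4 * y 3 - x 5 * y 2 + x 6 * y 1 + x 7 * y 0 := by
  show (∑ i, ∑ j, x i * y j * structC i j 7) = _
  simp (config := { decide := true }) only [Fin.sum_univ_eight, structC, eps, plusTriples]
  norm_num; ring


lemma inner_expand (x y : Oct) : ⟪x, y⟫ = x 0 * y 0 + x 1 * y 1 + x 2 * y 2 +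
    x 3 * y 3 + x 4 * y 4 + x 5 * y 5 + x 6 * y 6 + x 7 * y 7 := by
  simp [PiLp.inner_apply, RCLike.inner_apply, conj_trivial, Fin.sum_univ_eight]; ring

lemma cross2_apply (x y : Oct) (k : Fin 8) :
    cross2 x y k = octMul x y k + ⟪x, y⟫ * octe 0 k := rfl

lemma octMul_add_left (x y z : Oct) : octMul (x + y) z = octMul x z + octMul y z := by
  ext k
  show (∑ i, ∑ j, (x i + y i) * z j * structC i j k)
      = (∑ i, ∑ j, x i * z j * structC i j k) + (∑ i, ∑ j, y i * z j * structC i j k)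
  rw [← Finset.sum_add_distrib]
  exact Finset.sum_congr rfl fun i _ => by
    rw [← Finset.sum_add_distrib]
    exact Finset.sum_congr rfl fun j _ => by ring

lemma octMul_add_right (x y z : Oct) : octMul x (y + z) = octMul x y + octMul x z := by
  ext k
  show (∑ i, ∑ j, x i * (y j + z j) * structC i j k)
      = (∑ i, ∑ j, x i * y j * structC i j k) + (∑ i, ∑ j, x i * z j * structC i j k)
  rw [← Finset.sum_add_distrib]
  exact Finset.sum_congr rfl fun i _ => by
    rw [← Finset.sum_add_distrib]
    exact Finset.sum_congr rfl fun j _ => by ring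

lemma octMul_smul_left (a : ℝ) (x z : Oct) : octMul (a • x) z = a • octMul x z := by
  ext k
  show (∑ i, ∑ j, (a * x i) * z j * structC i j k)
      = a * (∑ i, ∑ j, x i * z j * structC i j k)
  rw [Finset.mul_sum]
  exact Finset.sum_congr rfl fun i _ => by
    rw [Finset.mul_sum]
    exact Finset.sum_congr rfl fun j _ => by ring

lemma octMul_smul_right (a : ℝ) (x z : Oct) : octMul x (a • z) = a • octMul x z := by
  ext k
  show (∑ i, ∑ j, x i * (a * z j) * structC i j k)
      = a * (∑ i, ∑ j, x i * z j * structC i j k)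
  rw [Finset.mul_sum]
  exact Finset.sum_congr rfl fun i _ => by
    rw [Finset.mul_sum]
    exact Finset.sum_congr rfl fun j _ => by ring

lemma cross2_add_left (x y z : Oct) : cross2 (x + y) z = cross2 x z + cross2 y z := by
  unfold cross2
  rw [octMul_add_left, inner_add_left, add_smul]
  abel

lemma cross2_add_right (x y z : Oct) : cross2 x (y + z) = cross2 x y + cross2 x z := by
  unfold cross2
  rw [octMul_add_right, inner_add_right, add_smul]
  abel

lemma cross2_smul_left (a : ℝ) (x z : Oct) : cross2 (a • x) z = a • cross2 x z := by
  unfold cross2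
  rw [octMul_smul_left, real_inner_smul_left, smul_add, smul_smul]

lemma cross2_smul_right (a : ℝ) (x z : Oct) : cross2 x (a • z) = a • cross2 x z := by
  unfold cross2
  rw [octMul_smul_right, real_inner_smul_right, smul_add, smul_smul]

lemma cross2_self (x : Oct) (hx : x 0 = 0) : cross2 x x = 0 := by
  have e0 : octe 0 0 = (1:ℝ) := by norm_num [octe, EuclideanSpace.single_apply]
  have e : ∀ k : Fin 8, k ≠ 0 → octe 0 k = 0 := by
    intro k hk
    simp [octe, EuclideanSpace.single_apply, hk]
  ext k
  rw [cross2_apply]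
  have h0 : (0 : Oct) k = 0 := rfl
  rw [h0]
  match k with
  | 0 => rw [octMul_apply0, inner_expand, e0, hx]; ring
  | 1 => rw [octMul_apply1, e 1 (by decide), hx]; ring
  | 2 => rw [octMul_apply2, e 2 (by decide), hx]; ring
  | 3 => rw [octMul_apply3, e 3 (by decide), hx]; ring
  | 4 => rw [octMul_apply4, e 4 (by decide), hx]; ring
  | 5 => rw [octMul_apply5, e 5 (by decide), hx]; ring
  | 6 => rw [octMul_apply6, e 6 (by decide), hx]; ring
  | 7 => rw [octMul_apply7, e 7 (by decide), hx]; ring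

lemma cross2_antisymm (x y : Oct) (hx : x 0 = 0) (hy : y 0 = 0) :
    cross2 y x = -cross2 x y := by
  have hxy : (x + y) 0 = 0 := by
    show x 0 + y 0 = 0
    rw [hx, hy, add_zero]
  have h := cross2_self (x + y) hxy
  rw [cross2_add_left, cross2_add_right, cross2_add_right, cross2_self x hx,
    cross2_self y hy] at h
  have h2 : cross2 x y + cross2 y x = 0 := by
    rw [zero_add, add_zero] at h
    exact h
  exact eq_neg_of_add_eq_zero_right h2

/-- `σ₂(u ∧ v) = u × v` is well defined on oriented 2-planes of Im 𝕆 ≅ ℝ⁷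
(positively oriented orthonormal bases of the same plane differ by a
rotation) and takes values in the unit sphere, orthogonal to the plane. -/
theorem stmt6 (u v : Oct) (hu0 : u 0 = 0) (hv0 : v 0 = 0)
    (hu : ‖u‖ = 1) (hv : ‖v‖ = 1) (huv : ⟪u, v⟫ = 0) :
    (∀ θ : ℝ, cross2 (Real.cos θ • u + Real.sin θ • v)
        (-Real.sin θ • u + Real.cos θ • v) = cross2 u v) ∧
    ‖cross2 u v‖ = 1 ∧ ⟪cross2 u v, u⟫ = 0 ∧ ⟪cross2 u v, v⟫ = 0 ∧
    (cross2 u v) 0 = 0 := by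
  have hcr : cross2 u v = octMul u v := by
    unfold cross2
    rw [huv, zero_smul, add_zero]
  have hA : u 1 * u 1 + u 2 * u 2 + u 3 * u 3 + u 4 * u 4 + u 5 * u 5 + u 6 * u 6 +
      u 7 * u 7 = 1 := by
    have h := real_inner_self_eq_norm_mul_norm u
    rw [hu, inner_expand, hu0] at h
    linarith
  have hB : v 1 * v 1 + v 2 * v 2 + v 3 * v 3 + v 4 * v 4 + v 5 * v 5 + v 6 * v 6 + v 7 * v 7 = 1 := by
    have h := real_inner_self_eq_norm_mul_norm v
    rw [hv, inner_expand, hv0] at h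
    linarith
  have hC : u 1 * v 1 + u 2 * v 2 + u 3 * v 3 + u 4 * v 4 + u 5 * v 5 + u 6 * v 6 +
      u 7 * v 7 = 0 := by
    have h := huv
    rw [inner_expand, hu0] at h
    linarith
  refine ⟨?_, ?_, ?_, ?_, ?_⟩
  · intro θ
    rw [cross2_add_left, cross2_smul_left, cross2_smul_left, cross2_add_right,
      cross2_add_right, cross2_smul_right, cross2_smul_right, cross2_smul_right,
      cross2_smul_right, cross2_self u hu0, cross2_self v hv0,
      cross2_antisymm u v hu0 hv0]
    match_scalars; linear_combination Real.sin_sq_add_cos_sq θ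
  · have h2 : ⟪cross2 u v, cross2 u v⟫ = 1 := by
      rw [hcr, inner_expand, octMul_apply0, octMul_apply1, octMul_apply2, octMul_apply3,
        octMul_apply4, octMul_apply5, octMul_apply6, octMul_apply7, hu0, hv0]
      linear_combination (v 1 * v 1 + v 2 * v 2 + v 3 * v 3 + v 4 * v 4 + v 5 * v 5 + v 6 * v 6 + v 7 * v 7) * hA + hB
    have h3 := real_inner_self_eq_norm_mul_norm (cross2 u v)
    rw [h2] at h3
    nlinarith [norm_nonneg (cross2 u v)]
  · rw [hcr, inner_expand, octMul_apply0, octMul_apply1, octMul_apply2, octMul_apply3,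
      octMul_apply4, octMul_apply5, octMul_apply6, octMul_apply7, hu0, hv0]
    ring
  · rw [hcr, inner_expand, octMul_apply0, octMul_apply1, octMul_apply2, octMul_apply3,
      octMul_apply4, octMul_apply5, octMul_apply6, octMul_apply7, hu0, hv0]
    ring
  · rw [hcr, octMul_apply0, hu0, hv0]
    linear_combination -hC
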